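/- (Surrogate risk bound for classifiers.) Let $(Z,Y,W)$ satisfy the latent Gaussian mixture model with $Z\mid Y=k\sim N_K(\alpha_k,\Sigma_{Z|Y})$, $\mathbb{P}(Y=k)=\pi_k$, $W$ independent of $(Z,Y)$, and $X=AZ+W$. Let $G_z^*(z)=\log\frac{\pi_1 f_{Z|1}(z)}{\pi_0 f_{Z|0}(z)}$ and let $\widehat\Lambda:\mathbb{R}^p\to\mathbb{R}$ be any measurable function, defining the classifier $\widehat g(x) = \mathbbm{1}\{\widehat\Lambda(x)\ge 0\}$. Then for every $t>0$, $\mathbb{P}\{\widehat g(X)\ne Y\} - R_z^* \le \mathbb{P}\{|\widehat\Lambda(X)-G_z^*(Z)|>t\} + t\,\pi_0\,\mathbb{P}\{-t\le G_z^*(Z)<0\mid Y=0\} + t\,\pi_1\,\mathbb{P}\{0\le G_z^*(Z)\le t\mid Y=1\}$, where $R_z^* = \inf_h\mathbb{P}\{h(Z)\ne Y\}$. -/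

import Mathlib

open Matrix MeasureTheory ProbabilityTheory

/-- Density of the multivariate Gaussian `N_K(α, Σ)` with respect to Lebesgue measure. -/
noncomputable def mvGaussDensity {K : ℕ} (α : Fin K → ℝ) (S : Matrix (Fin K) (Fin K) ℝ)
    (z : Fin K → ℝ) : ℝ :=
  Real.exp (-(1 / 2) * ((z - α) ⬝ᵥ S⁻¹.mulVec (z - α)))
    / Real.sqrt ((2 * Real.pi) ^ K * S.det)

lemma mvGauss_pos {K : ℕ} (α : Fin K → ℝ) {S : Matrix (Fin K) (Fin K) ℝ} (hS : S.PosDef)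
    (z : Fin K → ℝ) : 0 < mvGaussDensity α S z := by
  unfold mvGaussDensity
  apply div_pos (Real.exp_pos _)
  apply Real.sqrt_pos.mpr
  have := hS.det_pos
  have := Real.pi_pos
  positivity

lemma mvGauss_meas {K : ℕ} (α : Fin K → ℝ) (S : Matrix (Fin K) (Fin K) ℝ) :
    Measurable (mvGaussDensity α S) := by
  unfold mvGaussDensity
  apply Measurable.div _ measurable_const
  apply Real.measurable_exp.comp
  apply Measurable.const_mul
  unfold dotProduct Matrix.mulVec dotProduct
  exact Finset.measurable_sum _ fun i _ => by fun_prop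

-- Lemma A: comparison of weighted withDensity measures on a set
lemma densCmp {K : ℕ} (f g : (Fin K → ℝ) → ℝ) (c d : ℝ) (hc : 0 ≤ c) (hd : 0 ≤ d)
    (S : Set (Fin K → ℝ)) (hS : MeasurableSet S)
    (hfg : ∀ z ∈ S, c * f z ≤ d * g z) :
    ENNReal.ofReal c * (volume.withDensity fun z => ENNReal.ofReal (f z)) S
      ≤ ENNReal.ofReal d * (volume.withDensity fun z => ENNReal.ofReal (g z)) S := by
  rw [withDensity_apply _ hS, withDensity_apply _ hS,
    ← lintegral_const_mul' _ _ ENNReal.ofReal_ne_top,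
    ← lintegral_const_mul' _ _ ENNReal.ofReal_ne_top]
  refine setLIntegral_mono' hS fun z hz => ?_
  calc ENNReal.ofReal c * ENNReal.ofReal (f z) = ENNReal.ofReal (c * f z) :=
        (ENNReal.ofReal_mul hc).symm
    _ ≤ ENNReal.ofReal (d * g z) := ENNReal.ofReal_le_ofReal (hfg z hz)
    _ ≤ ENNReal.ofReal d * ENNReal.ofReal (g z) := le_of_eq (ENNReal.ofReal_mul hd)

-- Lemma B: product version
lemma prodCmp {K p : ℕ} (f g : (Fin K → ℝ) → ℝ) (hf : Measurable f) (hg : Measurable g)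
    (c d : ℝ) (hc : 0 ≤ c) (hd : 0 ≤ d)
    (ν : Measure (Fin p → ℝ)) [SFinite ν]
    (S : Set (Fin K → ℝ))
    (C : Set ((Fin K → ℝ) × (Fin p → ℝ))) (hC : MeasurableSet C)
    (hCS : ∀ x ∈ C, x.1 ∈ S)
    (hfg : ∀ z ∈ S, c * f z ≤ d * g z) :
    ENNReal.ofReal c * ((volume.withDensity fun z => ENNReal.ofReal (f z)).prod ν) C
      ≤ ENNReal.ofReal d * ((volume.withDensity fun z => ENNReal.ofReal (g z)).prod ν) C := by
  rw [Measure.prod_apply hC, Measure.prod_apply hC]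
  rw [lintegral_withDensity_eq_lintegral_mul _ hf.ennreal_ofReal
      (measurable_measure_prodMk_left hC),
    lintegral_withDensity_eq_lintegral_mul _ hg.ennreal_ofReal
      (measurable_measure_prodMk_left hC),
    ← lintegral_const_mul' _ _ ENNReal.ofReal_ne_top,
    ← lintegral_const_mul' _ _ ENNReal.ofReal_ne_top]
  refine lintegral_mono fun z => ?_
  by_cases hz : z ∈ S
  · simp only [Pi.mul_apply]
    rw [← mul_assoc, ← mul_assoc]
    refine mul_le_mul_left ?_ _
    calc ENNReal.ofReal c * ENNReal.ofReal (f z) = ENNReal.ofReal (c * f z) :=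
          (ENNReal.ofReal_mul hc).symm
      _ ≤ ENNReal.ofReal (d * g z) := ENNReal.ofReal_le_ofReal (hfg z hz)
      _ ≤ ENNReal.ofReal d * ENNReal.ofReal (g z) := le_of_eq (ENNReal.ofReal_mul hd)
  · have : Prod.mk z ⁻¹' C = ∅ := by
      ext w; simp only [Set.mem_preimage, Set.mem_empty_iff_false, iff_false]
      exact fun hw => hz (hCS _ hw)
    simp [this]

lemma condProdLaw {Ω : Type*} [MeasurableSpace Ω] (μ : Measure Ω) [IsProbabilityMeasure μ]
    {α β : Type*} [MeasurableSpace α] [MeasurableSpace β]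
    (Z : Ω → α) (Y : Ω → Bool) (W : Ω → β)
    (hZ : Measurable Z) (hY : Measurable Y) (hW : Measurable W)
    (hindep : IndepFun (fun ω => (Z ω, Y ω)) W μ) (b : Bool)
    (hb : μ {ω | Y ω = b} ≠ 0) :
    Measure.map (fun ω => (Z ω, W ω)) (μ[|{ω | Y ω = b}])
      = (Measure.map Z (μ[|{ω | Y ω = b}])).prod (Measure.map W μ) := by
  set s : Set Ω := {ω | Y ω = b} with hs
  have hms : MeasurableSet s := hY (measurableSet_singleton b)
  haveI : IsProbabilityMeasure (μ[|s]) := cond_isProbabilityMeasure hb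
  haveI : IsProbabilityMeasure (Measure.map Z (μ[|s])) :=
    Measure.isProbabilityMeasure_map hZ.aemeasurable
  haveI : IsProbabilityMeasure (Measure.map W μ) :=
    Measure.isProbabilityMeasure_map hW.aemeasurable
  refine (Measure.prod_eq fun S T hS hT => ?_).symm
  rw [Measure.map_apply (hZ.prodMk hW) (hS.prod hT), Set.mk_preimage_prod,
    Measure.map_apply hZ hS, Measure.map_apply hW hT,
    cond_apply hms, cond_apply hms]
  have h1 : s ∩ (Z ⁻¹' S ∩ W ⁻¹' T)
      = ((fun ω => (Z ω, Y ω)) ⁻¹' (S ×ˢ {b})) ∩ W ⁻¹' T := by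
    ext ω
    simp only [Set.mem_inter_iff, Set.mem_preimage, Set.mem_prod, Set.mem_singleton_iff,
      hs, Set.mem_setOf_eq]
    tauto
  have h2 : s ∩ Z ⁻¹' S = (fun ω => (Z ω, Y ω)) ⁻¹' (S ×ˢ {b}) := by
    ext ω
    simp only [Set.mem_inter_iff, Set.mem_preimage, Set.mem_prod, Set.mem_singleton_iff,
      hs, Set.mem_setOf_eq]
    tauto
  rw [h1, hindep.measure_inter_preimage_eq_mul _ _ (hS.prod (measurableSet_singleton b)) hT,
    h2, mul_assoc]

/-- Surrogate risk bound: for any measurable `Λ̂ : ℝ^p → ℝ` and the classifier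
`ĝ(x) = 1{Λ̂(x) ≥ 0}`, for every `t > 0`,
`P{ĝ(X) ≠ Y} - R_z^* ≤ P{|Λ̂(X) - G_z^*(Z)| > t} + t π0 P{-t ≤ G_z^*(Z) < 0 ∣ Y=0}
  + t π1 P{0 ≤ G_z^*(Z) ≤ t ∣ Y=1}`. -/
theorem stmt14 {Ω : Type*} [MeasurableSpace Ω] (μ : Measure Ω) [IsProbabilityMeasure μ]
    {p K : ℕ} (Z : Ω → Fin K → ℝ) (Y : Ω → Bool) (W : Ω → Fin p → ℝ)
    (hZ : Measurable Z) (hY : Measurable Y) (hW : Measurable W)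
    (A : Matrix (Fin p) (Fin K) ℝ) (X : Ω → Fin p → ℝ)
    (hX : ∀ ω, X ω = A.mulVec (Z ω) + W ω)
    (hindep : IndepFun (fun ω => (Z ω, Y ω)) W μ)
    (SZY : Matrix (Fin K) (Fin K) ℝ) (hZY : SZY.PosDef)
    (α0 α1 : Fin K → ℝ)
    (π0 π1 : ℝ) (h0 : 0 < π0) (h1 : 0 < π1) (hsum : π0 + π1 = 1)
    (hY0 : μ {ω | Y ω = false} = ENNReal.ofReal π0)
    (hY1 : μ {ω | Y ω = true} = ENNReal.ofReal π1)
    (hlaw0 : Measure.map Z (μ[|{ω | Y ω = false}])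
      = volume.withDensity (fun z => ENNReal.ofReal (mvGaussDensity α0 SZY z)))
    (hlaw1 : Measure.map Z (μ[|{ω | Y ω = true}])
      = volume.withDensity (fun z => ENNReal.ofReal (mvGaussDensity α1 SZY z)))
    (G : (Fin K → ℝ) → ℝ)
    (hG : ∀ z, G z = Real.log ((π1 * mvGaussDensity α1 SZY z)
        / (π0 * mvGaussDensity α0 SZY z)))
    (Lam : (Fin p → ℝ) → ℝ) (hLam : Measurable Lam)
    (t : ℝ) (ht : 0 < t) :
    μ {ω | (0 ≤ Lam (X ω)) ≠ (Y ω = true)}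
        - (⨅ h : {h : (Fin K → ℝ) → Bool // Measurable h}, μ {ω | h.1 (Z ω) ≠ Y ω})
      ≤ μ {ω | t < |Lam (X ω) - G (Z ω)|}
        + ENNReal.ofReal (t * π0)
            * (μ[|{ω | Y ω = false}]) {ω | -t ≤ G (Z ω) ∧ G (Z ω) < 0}
        + ENNReal.ofReal (t * π1)
            * (μ[|{ω | Y ω = true}]) {ω | 0 ≤ G (Z ω) ∧ G (Z ω) ≤ t} := by
  classical
  -- notation
  set s0 : Set Ω := {ω | Y ω = false} with hs0def
  set s1 : Set Ω := {ω | Y ω = true} with hs1def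
  set μ0 : Measure Ω := μ[|s0] with hμ0def
  set μ1 : Measure Ω := μ[|s1] with hμ1def
  set f0 : (Fin K → ℝ) → ℝ := mvGaussDensity α0 SZY with hf0def
  set f1 : (Fin K → ℝ) → ℝ := mvGaussDensity α1 SZY with hf1def
  have hms0 : MeasurableSet s0 := hY (measurableSet_singleton false)
  have hms1 : MeasurableSet s1 := hY (measurableSet_singleton true)
  have hs0ne : μ s0 ≠ 0 := by rw [hY0]; simp [ENNReal.ofReal_eq_zero, not_le, h0]
  have hs1ne : μ s1 ≠ 0 := by rw [hY1]; simp [ENNReal.ofReal_eq_zero, not_le, h1]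
  haveI : IsProbabilityMeasure μ0 := cond_isProbabilityMeasure hs0ne
  haveI : IsProbabilityMeasure μ1 := cond_isProbabilityMeasure hs1ne
  set ν : Measure (Fin p → ℝ) := Measure.map W μ with hνdef
  haveI : IsProbabilityMeasure ν := Measure.isProbabilityMeasure_map hW.aemeasurable
  -- measurability of basic maps
  have hf0pos : ∀ z, 0 < f0 z := mvGauss_pos α0 hZY
  have hf1pos : ∀ z, 0 < f1 z := mvGauss_pos α1 hZY
  have hf0m : Measurable f0 := mvGauss_meas α0 SZY
  have hf1m : Measurable f1 := mvGauss_meas α1 SZY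
  have hGmeas : Measurable G := by
    have : G = fun z => Real.log ((π1 * f1 z) / (π0 * f0 z)) := funext hG
    rw [this]
    exact Real.measurable_log.comp (((hf1m.const_mul π1)).div ((hf0m.const_mul π0)))
  have hmulvec : Measurable fun z : Fin K → ℝ => A.mulVec z := by
    refine measurable_pi_lambda _ fun i => ?_
    simp only [Matrix.mulVec, dotProduct]
    exact Finset.measurable_sum _ fun j _ => by fun_prop
  have hXm : Measurable X := by
    have : X = fun ω => A.mulVec (Z ω) + W ω := funext hX
    rw [this]; exact (hmulvec.comp hZ).add hW
  -- pointwise density facts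
  have hrpos : ∀ z, 0 < (π1 * f1 z) / (π0 * f0 z) := fun z =>
    div_pos (mul_pos h1 (hf1pos z)) (mul_pos h0 (hf0pos z))
  have fact1 : ∀ z, G z < 0 → π1 * f1 z ≤ π0 * f0 z := by
    intro z hz
    rw [hG z] at hz
    have := (Real.log_neg_iff (hrpos z)).mp hz
    have h' := (div_lt_one (mul_pos h0 (hf0pos z))).mp this
    linarith
  have fact2 : ∀ z, 0 ≤ G z → π0 * f0 z ≤ π1 * f1 z := by
    intro z hz
    rw [hG z] at hz
    have : (1:ℝ) ≤ (π1 * f1 z) / (π0 * f0 z) := (Real.log_nonneg_iff (hrpos z)).mp hz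
    have h' := (one_le_div (mul_pos h0 (hf0pos z))).mp this
    linarith
  have fact3 : ∀ z, -t ≤ G z → π0 * f0 z ≤ Real.exp t * (π1 * f1 z) := by
    intro z hz
    rw [hG z] at hz
    have hr : Real.exp (-t) ≤ (π1 * f1 z) / (π0 * f0 z) := by
      calc Real.exp (-t) ≤ Real.exp (Real.log ((π1 * f1 z) / (π0 * f0 z))) :=
            Real.exp_le_exp.mpr hz
        _ = (π1 * f1 z) / (π0 * f0 z) := Real.exp_log (hrpos z)
    have h2 : Real.exp (-t) * (π0 * f0 z) ≤ π1 * f1 z := by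
      have := mul_le_mul_of_nonneg_right hr (mul_pos h0 (hf0pos z)).le
      rwa [div_mul_cancel₀] at this
      exact (mul_pos h0 (hf0pos z)).ne'
    calc π0 * f0 z = Real.exp t * (Real.exp (-t) * (π0 * f0 z)) := by
          rw [← mul_assoc, ← Real.exp_add]; simp
      _ ≤ Real.exp t * (π1 * f1 z) :=
          mul_le_mul_of_nonneg_left h2 (Real.exp_pos t).le
  have fact4 : ∀ z, G z ≤ t → π1 * f1 z ≤ Real.exp t * (π0 * f0 z) := by
    intro z hz
    rw [hG z] at hz
    have hr : (π1 * f1 z) / (π0 * f0 z) ≤ Real.exp t := by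
      calc (π1 * f1 z) / (π0 * f0 z)
          = Real.exp (Real.log ((π1 * f1 z) / (π0 * f0 z))) := (Real.exp_log (hrpos z)).symm
        _ ≤ Real.exp t := Real.exp_le_exp.mpr hz
    have := mul_le_mul_of_nonneg_right hr (mul_pos h0 (hf0pos z)).le
    rwa [div_mul_cancel₀] at this
    exact (mul_pos h0 (hf0pos z)).ne'
  -- events
  set L : Set Ω := {ω | 0 ≤ Lam (X ω)} with hLdef
  set Gp : Set Ω := {ω | 0 ≤ G (Z ω)} with hGpdef
  set Far : Set Ω := {ω | t < |Lam (X ω) - G (Z ω)|} with hFardef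
  have hLM : MeasurableSet L := measurableSet_le measurable_const (hLam.comp hXm)
  have hGpM : MeasurableSet Gp := measurableSet_le measurable_const (hGmeas.comp hZ)
  have hFarM : MeasurableSet Far :=
    measurableSet_lt measurable_const ((hLam.comp hXm).sub (hGmeas.comp hZ)).abs
  -- conditional measure identities
  have hps0 : ∀ U : Set Ω, μ (s0 ∩ U) = ENNReal.ofReal π0 * μ0 U := by
    intro U
    rw [hμ0def, cond_apply hms0, ← mul_assoc, hY0, ENNReal.mul_inv_cancel, one_mul]
    · simpa [ENNReal.ofReal_eq_zero, not_le] using h0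
    · exact ENNReal.ofReal_ne_top
  have hps1 : ∀ U : Set Ω, μ (s1 ∩ U) = ENNReal.ofReal π1 * μ1 U := by
    intro U
    rw [hμ1def, cond_apply hms1, ← mul_assoc, hY1, ENNReal.mul_inv_cancel, one_mul]
    · simpa [ENNReal.ofReal_eq_zero, not_le] using h1
    · exact ENNReal.ofReal_ne_top
  have hdisj : Disjoint s0 s1 := by
    rw [Set.disjoint_left]; intro ω h0' h1'
    simp only [hs0def, hs1def, Set.mem_setOf_eq] at h0' h1'
    rw [h0'] at h1'; exact Bool.false_ne_true h1'
  -- error decomposition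
  have hErr : μ {ω | (0 ≤ Lam (X ω)) ≠ (Y ω = true)}
      = ENNReal.ofReal π0 * μ0 L + ENNReal.ofReal π1 * μ1 Lᶜ := by
    have hset : {ω | (0 ≤ Lam (X ω)) ≠ (Y ω = true)} = (s0 ∩ L) ∪ (s1 ∩ Lᶜ) := by
      ext ω
      simp only [Set.mem_setOf_eq, Set.mem_union, Set.mem_inter_iff, Set.mem_compl_iff,
        hs0def, hs1def, hLdef, ne_eq, eq_iff_iff]
      cases hy : Y ω <;> by_cases hl : 0 ≤ Lam (X ω) <;> simp [hy, hl]
    rw [hset, measure_union (hdisj.mono Set.inter_subset_left Set.inter_subset_left)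
      (hms1.inter hLM.compl), hps0, hps1]
  -- comparisons via densities (Bayes part)
  have hcmpGe : ∀ T : Set (Fin K → ℝ), MeasurableSet T → (∀ z ∈ T, 0 ≤ G z) →
      ENNReal.ofReal π0 * μ0 (Z ⁻¹' T) ≤ ENNReal.ofReal π1 * μ1 (Z ⁻¹' T) := by
    intro T hT hTG
    rw [← Measure.map_apply hZ hT, ← Measure.map_apply hZ hT, hμ0def, hμ1def, hlaw0, hlaw1]
    exact densCmp f0 f1 π0 π1 h0.le h1.le T hT fun z hz => fact2 z (hTG z hz)
  have hcmpLt : ∀ T : Set (Fin K → ℝ), MeasurableSet T → (∀ z ∈ T, G z < 0) →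
      ENNReal.ofReal π1 * μ1 (Z ⁻¹' T) ≤ ENNReal.ofReal π0 * μ0 (Z ⁻¹' T) := by
    intro T hT hTG
    rw [← Measure.map_apply hZ hT, ← Measure.map_apply hZ hT, hμ0def, hμ1def, hlaw0, hlaw1]
    exact densCmp f1 f0 π1 π0 h1.le h0.le T hT fun z hz => fact1 z (hTG z hz)
  -- Bayes optimality: any measurable classifier has risk at least that of G-threshold
  have hBayes : ∀ h : (Fin K → ℝ) → Bool, Measurable h →
      ENNReal.ofReal π0 * μ0 Gp + ENNReal.ofReal π1 * μ1 Gpᶜ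
        ≤ μ {ω | h (Z ω) ≠ Y ω} := by
    intro h hh
    set Sh : Set (Fin K → ℝ) := {z | h z = true} with hShdef
    have hShM : MeasurableSet Sh := hh (measurableSet_singleton true)
    set Zh : Set Ω := Z ⁻¹' Sh with hZhdef
    have hZhM : MeasurableSet Zh := hZ hShM
    have hRisk : μ {ω | h (Z ω) ≠ Y ω}
        = ENNReal.ofReal π0 * μ0 Zh + ENNReal.ofReal π1 * μ1 Zhᶜ := by
      have hset : {ω | h (Z ω) ≠ Y ω} = (s0 ∩ Zh) ∪ (s1 ∩ Zhᶜ) := by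
        ext ω
        simp only [Set.mem_setOf_eq, Set.mem_union, Set.mem_inter_iff, Set.mem_compl_iff,
          hs0def, hs1def, hZhdef, hShdef, Set.mem_preimage, ne_eq]
        cases hy : Y ω <;> cases hzv : h (Z ω) <;> simp [hy, hzv]
      rw [hset, measure_union (hdisj.mono Set.inter_subset_left Set.inter_subset_left)
        (hms1.inter hZhM.compl), hps0, hps1]
    rw [hRisk]
    -- split both sides along Zh and Gp
    have e0 : μ0 Gp = μ0 (Gp ∩ Zh) + μ0 (Gp \ Zh) := (measure_inter_add_diff Gp hZhM).symm
    have e1 : μ1 Gpᶜ = μ1 (Gpᶜ ∩ Zh) + μ1 (Gpᶜ \ Zh) :=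
      (measure_inter_add_diff Gpᶜ hZhM).symm
    have e2 : μ0 Zh = μ0 (Gp ∩ Zh) + μ0 (Gpᶜ ∩ Zh) := by
      have ha : Zh ∩ Gp = Gp ∩ Zh := Set.inter_comm _ _
      have hb' : Zh \ Gp = Gpᶜ ∩ Zh := by
        ext ω; simp only [Set.mem_diff, Set.mem_inter_iff, Set.mem_compl_iff]; tauto
      rw [← measure_inter_add_diff (μ := μ0) Zh hGpM, ha, hb']
    have e3 : μ1 Zhᶜ = μ1 (Gp \ Zh) + μ1 (Gpᶜ \ Zh) := by
      have ha : Zhᶜ ∩ Gp = Gp \ Zh := by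
        ext ω; simp only [Set.mem_inter_iff, Set.mem_compl_iff, Set.mem_diff]; tauto
      have hb' : Zhᶜ \ Gp = Gpᶜ \ Zh := by
        ext ω; simp only [Set.mem_diff, Set.mem_compl_iff]; tauto
      rw [← measure_inter_add_diff (μ := μ1) Zhᶜ hGpM, ha, hb']
    rw [e0, e1, e2, e3, mul_add, mul_add, mul_add, mul_add]
    have key1 : ENNReal.ofReal π0 * μ0 (Gp \ Zh) ≤ ENNReal.ofReal π1 * μ1 (Gp \ Zh) := by
      have hpre : Gp \ Zh = Z ⁻¹' ({z | 0 ≤ G z} \ Sh) := by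
        ext ω; simp [hGpdef, hZhdef, Set.mem_diff]
      rw [hpre]
      refine hcmpGe _ ((measurableSet_le measurable_const hGmeas).diff hShM) ?_
      intro z hz; exact hz.1
    have key2 : ENNReal.ofReal π1 * μ1 (Gpᶜ ∩ Zh) ≤ ENNReal.ofReal π0 * μ0 (Gpᶜ ∩ Zh) := by
      have hpre : Gpᶜ ∩ Zh = Z ⁻¹' ({z | 0 ≤ G z}ᶜ ∩ Sh) := by
        ext ω; simp [hGpdef, hZhdef]
      rw [hpre]
      refine hcmpLt _ (((measurableSet_le measurable_const hGmeas).compl).inter hShM) ?_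
      intro z hz
      have h' := hz.1
      simp only [Set.mem_compl_iff, Set.mem_setOf_eq] at h'
      exact not_le.mp h'
    calc ENNReal.ofReal π0 * μ0 (Gp ∩ Zh) + ENNReal.ofReal π0 * μ0 (Gp \ Zh)
          + (ENNReal.ofReal π1 * μ1 (Gpᶜ ∩ Zh) + ENNReal.ofReal π1 * μ1 (Gpᶜ \ Zh))
        ≤ ENNReal.ofReal π0 * μ0 (Gp ∩ Zh) + ENNReal.ofReal π1 * μ1 (Gp \ Zh)
          + (ENNReal.ofReal π0 * μ0 (Gpᶜ ∩ Zh) + ENNReal.ofReal π1 * μ1 (Gpᶜ \ Zh)) := by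
          exact add_le_add (add_le_add le_rfl key1) (add_le_add key2 le_rfl)
      _ = ENNReal.ofReal π0 * μ0 (Gp ∩ Zh) + ENNReal.ofReal π0 * μ0 (Gpᶜ ∩ Zh)
          + (ENNReal.ofReal π1 * μ1 (Gp \ Zh) + ENNReal.ofReal π1 * μ1 (Gpᶜ \ Zh)) := by
          ring
  -- product structure
  have hmap0 : Measure.map (fun ω => (Z ω, W ω)) μ0 = (Measure.map Z μ0).prod ν :=
    condProdLaw μ Z Y W hZ hY hW hindep false hs0ne
  have hmap1 : Measure.map (fun ω => (Z ω, W ω)) μ1 = (Measure.map Z μ1).prod ν :=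
    condProdLaw μ Z Y W hZ hY hW hindep true hs1ne
  -- the two "close" events and their product representations
  set E0 : Set Ω := (L \ Gp) \ Far with hE0def
  set E1 : Set Ω := (Lᶜ ∩ Gp) \ Far with hE1def
  set φ : (Fin K → ℝ) × (Fin p → ℝ) → Fin p → ℝ := fun x => A.mulVec x.1 + x.2 with hφdef
  have hφm : Measurable φ := (hmulvec.comp measurable_fst).add measurable_snd
  set C0 : Set ((Fin K → ℝ) × (Fin p → ℝ)) :=
    {x | 0 ≤ Lam (φ x)} ∩ ({x | 0 ≤ G x.1}ᶜ ∩ {x | t < |Lam (φ x) - G x.1|}ᶜ) with hC0def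
  set C1 : Set ((Fin K → ℝ) × (Fin p → ℝ)) :=
    {x | 0 ≤ Lam (φ x)}ᶜ ∩ ({x | 0 ≤ G x.1} ∩ {x | t < |Lam (φ x) - G x.1|}ᶜ) with hC1def
  have hC0M : MeasurableSet C0 :=
    (measurableSet_le measurable_const (hLam.comp hφm)).inter
      ((measurableSet_le measurable_const (hGmeas.comp measurable_fst)).compl.inter
        (measurableSet_lt measurable_const
          ((hLam.comp hφm).sub (hGmeas.comp measurable_fst)).abs).compl)
  have hC1M : MeasurableSet C1 :=
    (measurableSet_le measurable_const (hLam.comp hφm)).compl.inter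
      ((measurableSet_le measurable_const (hGmeas.comp measurable_fst)).inter
        (measurableSet_lt measurable_const
          ((hLam.comp hφm).sub (hGmeas.comp measurable_fst)).abs).compl)
  have hE0pre : E0 = (fun ω => (Z ω, W ω)) ⁻¹' C0 := by
    ext ω
    simp only [hE0def, Set.mem_diff, Set.mem_inter_iff, Set.mem_compl_iff, hLdef, hGpdef,
      hFardef, Set.mem_setOf_eq, hC0def, Set.mem_preimage, hφdef, ← hX ω]
    tauto
  have hE1pre : E1 = (fun ω => (Z ω, W ω)) ⁻¹' C1 := by
    ext ω
    simp only [hE1def, Set.mem_diff, Set.mem_inter_iff, Set.mem_compl_iff, hLdef, hGpdef,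
      hFardef, Set.mem_setOf_eq, hC1def, Set.mem_preimage, hφdef, ← hX ω]
    tauto
  have hE0v : ∀ k : Bool, (μ[|{ω | Y ω = k}]) E0
      = ((Measure.map Z (μ[|{ω | Y ω = k}])).prod ν) C0 := by
    intro k
    cases k
    · rw [hE0pre, ← Measure.map_apply (hZ.prodMk hW) hC0M]
      exact congrFun (congrArg _ hmap0) C0
    · rw [hE0pre, ← Measure.map_apply (hZ.prodMk hW) hC0M]
      exact congrFun (congrArg _ hmap1) C0
  have hE1v : ∀ k : Bool, (μ[|{ω | Y ω = k}]) E1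
      = ((Measure.map Z (μ[|{ω | Y ω = k}])).prod ν) C1 := by
    intro k
    cases k
    · rw [hE1pre, ← Measure.map_apply (hZ.prodMk hW) hC1M]
      exact congrFun (congrArg _ hmap0) C1
    · rw [hE1pre, ← Measure.map_apply (hZ.prodMk hW) hC1M]
      exact congrFun (congrArg _ hmap1) C1
  -- comparison on the close events
  have cmp0 : ENNReal.ofReal π0 * μ0 E0 ≤ ENNReal.ofReal (Real.exp t * π1) * μ1 E0 := by
    rw [hμ0def, hμ1def, hE0v false, hE0v true, hlaw0, hlaw1]
    refine prodCmp f0 f1 hf0m hf1m π0 (Real.exp t * π1) h0.le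
      (mul_nonneg (Real.exp_pos t).le h1.le) ν {z | -t ≤ G z ∧ G z < 0} C0 hC0M ?_ ?_
    · rintro x ⟨hx1, hx2, hx3⟩
      simp only [Set.mem_compl_iff, Set.mem_setOf_eq] at hx1 hx2 hx3
      have habs := abs_le.mp (not_lt.mp hx3)
      constructor
      · linarith [habs.1]
      · exact not_le.mp hx2
    · intro z hz
      rw [mul_assoc]
      exact fact3 z hz.1
  have cmp1 : ENNReal.ofReal π1 * μ1 E1 ≤ ENNReal.ofReal (Real.exp t * π0) * μ0 E1 := by
    rw [hμ0def, hμ1def, hE1v false, hE1v true, hlaw0, hlaw1]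
    refine prodCmp f1 f0 hf1m hf0m π1 (Real.exp t * π0) h1.le
      (mul_nonneg (Real.exp_pos t).le h0.le) ν {z | 0 ≤ G z ∧ G z ≤ t} C1 hC1M ?_ ?_
    · rintro x ⟨hx1, hx2, hx3⟩
      simp only [Set.mem_compl_iff, Set.mem_setOf_eq] at hx1 hx2 hx3
      have habs := abs_le.mp (not_lt.mp hx3)
      refine ⟨hx2, ?_⟩
      have : Lam (φ x) < 0 := not_le.mp hx1
      linarith [habs.2]
    · intro z hz
      rw [mul_assoc]
      exact fact4 z hz.2
  -- the interval events
  set I0e : Set Ω := {ω | -t ≤ G (Z ω) ∧ G (Z ω) < 0} with hI0def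
  set I1e : Set Ω := {ω | 0 ≤ G (Z ω) ∧ G (Z ω) ≤ t} with hI1def
  have hE0sub : E0 ⊆ I0e := by
    rintro ω ⟨⟨hl, hg⟩, hf⟩
    simp only [hLdef, hGpdef, hFardef, Set.mem_setOf_eq] at hl hg hf
    have habs := abs_le.mp (not_lt.mp hf)
    exact ⟨by linarith [habs.1], not_le.mp hg⟩
  have hE1sub : E1 ⊆ I1e := by
    rintro ω ⟨⟨hl, hg⟩, hf⟩
    simp only [hLdef, hGpdef, hFardef, Set.mem_compl_iff, Set.mem_setOf_eq] at hl hg hf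
    have habs := abs_le.mp (not_lt.mp hf)
    have : Lam (X ω) < 0 := not_le.mp hl
    exact ⟨hg, by linarith [habs.2]⟩
  -- key inequalities transferring the factor t
  have hfin : ∀ (m : Measure Ω) [IsProbabilityMeasure m] (c : ℝ) (U : Set Ω),
      ENNReal.ofReal c * m U ≠ ⊤ := fun m _ c U =>
    ENNReal.mul_ne_top ENNReal.ofReal_ne_top (measure_ne_top m U)
  have key0 : ENNReal.ofReal π0 * μ0 E0
      ≤ ENNReal.ofReal (t * π0) * μ0 I0e + ENNReal.ofReal π1 * μ1 E0 := by
    refine (ENNReal.toReal_le_toReal (hfin μ0 π0 E0) ?_).mp ?_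
    · exact ENNReal.add_ne_top.mpr ⟨hfin μ0 _ I0e, hfin μ1 _ E0⟩
    rw [ENNReal.toReal_add (hfin μ0 _ I0e) (hfin μ1 _ E0), ENNReal.toReal_mul,
      ENNReal.toReal_mul, ENNReal.toReal_mul, ENNReal.toReal_ofReal h0.le,
      ENNReal.toReal_ofReal h1.le, ENNReal.toReal_ofReal (mul_nonneg ht.le h0.le)]
    set x0 := (μ0 E0).toReal with hx0
    set y0 := (μ1 E0).toReal with hy0
    set m0 := (μ0 I0e).toReal with hm0
    have hcmpR : π0 * x0 ≤ Real.exp t * (π1 * y0) := by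
      have := (ENNReal.toReal_le_toReal (hfin μ0 _ E0) (hfin μ1 _ E0)).mpr cmp0
      rw [ENNReal.toReal_mul, ENNReal.toReal_mul, ENNReal.toReal_ofReal h0.le,
        ENNReal.toReal_ofReal (mul_nonneg (Real.exp_pos t).le h1.le)] at this
      rw [mul_assoc] at this
      exact this
    have hx0m : x0 ≤ m0 := ENNReal.toReal_mono (measure_ne_top _ _) (measure_mono hE0sub)
    have hx0nn : 0 ≤ x0 := ENNReal.toReal_nonneg
    have hb2 : Real.exp (-t) * (π0 * x0) ≤ π1 * y0 := by
      calc Real.exp (-t) * (π0 * x0) ≤ Real.exp (-t) * (Real.exp t * (π1 * y0)) :=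
            mul_le_mul_of_nonneg_left hcmpR (Real.exp_pos _).le
        _ = π1 * y0 := by rw [← mul_assoc, ← Real.exp_add]; simp
    have he1 : (1 - Real.exp (-t)) * (π0 * x0) ≤ t * (π0 * x0) :=
      mul_le_mul_of_nonneg_right (by nlinarith [Real.add_one_le_exp (-t)])
        (mul_nonneg h0.le hx0nn)
    have he2 : t * (π0 * x0) ≤ t * π0 * m0 := by nlinarith [mul_le_mul_of_nonneg_left hx0m (mul_pos ht h0).le]
    nlinarith [hb2, he1, he2]
  have key1 : ENNReal.ofReal π1 * μ1 E1
      ≤ ENNReal.ofReal (t * π1) * μ1 I1e + ENNReal.ofReal π0 * μ0 E1 := by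
    refine (ENNReal.toReal_le_toReal (hfin μ1 π1 E1) ?_).mp ?_
    · exact ENNReal.add_ne_top.mpr ⟨hfin μ1 _ I1e, hfin μ0 _ E1⟩
    rw [ENNReal.toReal_add (hfin μ1 _ I1e) (hfin μ0 _ E1), ENNReal.toReal_mul,
      ENNReal.toReal_mul, ENNReal.toReal_mul, ENNReal.toReal_ofReal h1.le,
      ENNReal.toReal_ofReal h0.le, ENNReal.toReal_ofReal (mul_nonneg ht.le h1.le)]
    set x1 := (μ1 E1).toReal with hx1
    set y1 := (μ0 E1).toReal with hy1
    set m1 := (μ1 I1e).toReal with hm1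
    have hcmpR : π1 * x1 ≤ Real.exp t * (π0 * y1) := by
      have := (ENNReal.toReal_le_toReal (hfin μ1 _ E1) (hfin μ0 _ E1)).mpr cmp1
      rw [ENNReal.toReal_mul, ENNReal.toReal_mul, ENNReal.toReal_ofReal h1.le,
        ENNReal.toReal_ofReal (mul_nonneg (Real.exp_pos t).le h0.le)] at this
      rw [mul_assoc] at this
      exact this
    have hx1m : x1 ≤ m1 := ENNReal.toReal_mono (measure_ne_top _ _) (measure_mono hE1sub)
    have hx1nn : 0 ≤ x1 := ENNReal.toReal_nonneg
    have hb2 : Real.exp (-t) * (π1 * x1) ≤ π0 * y1 := by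
      calc Real.exp (-t) * (π1 * x1) ≤ Real.exp (-t) * (Real.exp t * (π0 * y1)) :=
            mul_le_mul_of_nonneg_left hcmpR (Real.exp_pos _).le
        _ = π0 * y1 := by rw [← mul_assoc, ← Real.exp_add]; simp
    have he1 : (1 - Real.exp (-t)) * (π1 * x1) ≤ t * (π1 * x1) :=
      mul_le_mul_of_nonneg_right (by nlinarith [Real.add_one_le_exp (-t)])
        (mul_nonneg h1.le hx1nn)
    have he2 : t * (π1 * x1) ≤ t * π1 * m1 := by nlinarith [mul_le_mul_of_nonneg_left hx1m (mul_pos ht h1).le]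
    nlinarith [hb2, he1, he2]
  -- splitting the error measures
  have hL0 : μ0 L = μ0 (L ∩ Gp) + (μ0 ((L \ Gp) ∩ Far) + μ0 E0) := by
    rw [hE0def, ← measure_inter_add_diff (μ := μ0) L hGpM,
      ← measure_inter_add_diff (μ := μ0) (L \ Gp) hFarM]
  have hL1 : μ1 Lᶜ = (μ1 ((Lᶜ ∩ Gp) ∩ Far) + μ1 E1) + μ1 (Lᶜ \ Gp) := by
    rw [hE1def, ← measure_inter_add_diff (μ := μ1) Lᶜ hGpM,
      ← measure_inter_add_diff (μ := μ1) (Lᶜ ∩ Gp) hFarM]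
  -- far bound
  have hfar : ENNReal.ofReal π0 * μ0 ((L \ Gp) ∩ Far)
      + ENNReal.ofReal π1 * μ1 ((Lᶜ ∩ Gp) ∩ Far) ≤ μ Far := by
    rw [← hps0, ← hps1]
    have hdisj2 : Disjoint (s0 ∩ ((L \ Gp) ∩ Far)) (s1 ∩ ((Lᶜ ∩ Gp) ∩ Far)) :=
      hdisj.mono Set.inter_subset_left Set.inter_subset_left
    rw [← measure_union hdisj2 (hms1.inter ((hLM.compl.inter hGpM).inter hFarM))]
    refine measure_mono ?_
    rintro ω (⟨_, _, hf⟩ | ⟨_, _, hf⟩) <;> exact hf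
  -- regrouping bounds
  have hreg0 : μ0 (L ∩ Gp) + μ0 E1 ≤ μ0 Gp := by
    calc μ0 (L ∩ Gp) + μ0 E1 ≤ μ0 (Gp ∩ L) + μ0 (Gp \ L) := by
          refine add_le_add (le_of_eq (by rw [Set.inter_comm])) (measure_mono ?_)
          rintro ω ⟨⟨hl, hg⟩, _⟩; exact ⟨hg, hl⟩
      _ = μ0 Gp := measure_inter_add_diff Gp hLM
  have hreg1 : μ1 (Lᶜ \ Gp) + μ1 E0 ≤ μ1 Gpᶜ := by
    calc μ1 (Lᶜ \ Gp) + μ1 E0 ≤ μ1 (Gpᶜ ∩ Lᶜ) + μ1 (Gpᶜ \ Lᶜ) := by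
          refine add_le_add (le_of_eq ?_) (measure_mono ?_)
          · congr 1; ext ω
            simp only [Set.mem_diff, Set.mem_inter_iff, Set.mem_compl_iff]; tauto
          · rintro ω ⟨⟨hl, hg⟩, _⟩
            exact ⟨hg, by simp only [Set.mem_compl_iff, not_not]; exact hl⟩
      _ = μ1 Gpᶜ := measure_inter_add_diff Gpᶜ hLM.compl
  -- conclusion
  haveI : Nonempty {h : (Fin K → ℝ) → Bool // Measurable h} :=
    ⟨⟨fun _ => false, measurable_const⟩⟩
  rw [tsub_le_iff_right, ENNReal.add_iInf]
  refine le_iInf fun hp => ?_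
  calc μ {ω | (0 ≤ Lam (X ω)) ≠ (Y ω = true)}
      = ENNReal.ofReal π0 * (μ0 (L ∩ Gp) + (μ0 ((L \ Gp) ∩ Far) + μ0 E0))
        + ENNReal.ofReal π1 * ((μ1 ((Lᶜ ∩ Gp) ∩ Far) + μ1 E1) + μ1 (Lᶜ \ Gp)) := by
        rw [hErr, hL0, hL1]
    _ = (ENNReal.ofReal π0 * μ0 ((L \ Gp) ∩ Far) + ENNReal.ofReal π1 * μ1 ((Lᶜ ∩ Gp) ∩ Far))
        + ENNReal.ofReal π0 * μ0 E0 + ENNReal.ofReal π1 * μ1 E1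
        + (ENNReal.ofReal π0 * μ0 (L ∩ Gp) + ENNReal.ofReal π1 * μ1 (Lᶜ \ Gp)) := by
        ring
    _ ≤ μ Far
        + (ENNReal.ofReal (t * π0) * μ0 I0e + ENNReal.ofReal π1 * μ1 E0)
        + (ENNReal.ofReal (t * π1) * μ1 I1e + ENNReal.ofReal π0 * μ0 E1)
        + (ENNReal.ofReal π0 * μ0 (L ∩ Gp) + ENNReal.ofReal π1 * μ1 (Lᶜ \ Gp)) :=
        add_le_add (add_le_add (add_le_add hfar key0) key1) le_rfl
    _ = μ Far + ENNReal.ofReal (t * π0) * μ0 I0e + ENNReal.ofReal (t * π1) * μ1 I1e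
        + (ENNReal.ofReal π0 * (μ0 (L ∩ Gp) + μ0 E1)
            + ENNReal.ofReal π1 * (μ1 (Lᶜ \ Gp) + μ1 E0)) := by
        ring
    _ ≤ μ Far + ENNReal.ofReal (t * π0) * μ0 I0e + ENNReal.ofReal (t * π1) * μ1 I1e
        + (ENNReal.ofReal π0 * μ0 Gp + ENNReal.ofReal π1 * μ1 Gpᶜ) :=
        add_le_add le_rfl (add_le_add (mul_le_mul_right hreg0 _) (mul_le_mul_right hreg1 _))
    _ ≤ μ Far + ENNReal.ofReal (t * π0) * μ0 I0e + ENNReal.ofReal (t * π1) * μ1 I1e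
        + μ {ω | hp.1 (Z ω) ≠ Y ω} :=
        add_le_add le_rfl (hBayes hp.1 hp.2)
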